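/- Let d ≥ 3, 1 ≤ l ≤ n, let v₁,…,v_l ∈ ℝⁿ be orthonormal vectors, λ₁,…,λ_l ∈ ℝ nonzero, and let f(x) = Σ_{i=1}^l λᵢ (vᵢ·x)^d ∈ ℂ[x₁,…,xₙ]. For every nonempty subset S ⊆ {1,…,l}, the set of complex lines ℂ·w spanned by eigenvectors w of the corresponding tensor T with w = Σ_{i=1}^l (vᵢ·w)vᵢ and { i : vᵢ·w ≠ 0 } = S has exactly (d−2)^{|S|−1} elements. Consequently the total number of eigenvector lines contained in the complex span of v₁,…,v_l is ((d−1)^l − 1)/(d−2). -/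

import Mathlib

open Finset MvPolynomial


private lemma proj_lem {n l : ℕ} (u : Fin l → Fin n → ℂ)
    (horth : ∀ i j : Fin l, (∑ s : Fin n, u i s * u j s) = if i = j then 1 else 0)
    (b : Fin l → ℂ) (j : Fin l) :
    (∑ s : Fin n, u j s * (∑ i : Fin l, b i * u i s)) = b j := by
  simp_rw [Finset.mul_sum]
  rw [Finset.sum_comm]
  have h : ∀ i : Fin l, ∑ s : Fin n, u j s * (b i * u i s)
      = b i * (if i = j then 1 else 0) := by
    intro i
    rw [← horth i j, Finset.mul_sum]
    congr 1; ext s; ring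
  simp_rw [h]
  simp

-- from the eigen condition, coordinates satisfy  d λ_i c_i^{d-1} = μ c_i
private lemma eigen_coords {n l d : ℕ} (v : Fin l → Fin n → ℝ) (lam : Fin l → ℝ)
    (horth : ∀ i j : Fin l,
      (∑ s : Fin n, ((v i s : ℂ)) * ((v j s : ℂ))) = if i = j then 1 else 0)
    (w : Fin n → ℂ) (hw0 : w ≠ 0)
    (g : Fin n → ℂ)
    (hg : ∀ s, g s = ∑ i : Fin l, (lam i : ℂ) *
          ((d : ℂ) * (∑ t : Fin n, (v i t : ℂ) * w t) ^ (d - 1) * (v i s : ℂ)))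
    (heig : ∀ s t : Fin n, g s * w t = g t * w s) :
    ∃ μ : ℂ, ∀ i : Fin l, (d : ℂ) * (lam i : ℂ) *
        (∑ t : Fin n, (v i t : ℂ) * w t) ^ (d - 1)
      = μ * (∑ t : Fin n, (v i t : ℂ) * w t) := by
  obtain ⟨t₀, ht₀⟩ : ∃ t₀, w t₀ ≠ 0 := by
    by_contra h; push_neg at h; exact hw0 (funext h)
  refine ⟨g t₀ / w t₀, fun j => ?_⟩
  have hgw : ∀ s, g s = (g t₀ / w t₀) * w s := by
    intro s
    field_simp
    exact heig s t₀
  have hproj : (∑ s : Fin n, (v j s : ℂ) * g s)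
      = (d : ℂ) * (lam j : ℂ) * (∑ t : Fin n, (v j t : ℂ) * w t) ^ (d - 1) := by
    calc (∑ s : Fin n, (v j s : ℂ) * g s)
        = ∑ s : Fin n, (v j s : ℂ) *
            (∑ i : Fin l, ((lam i : ℂ) * (d : ℂ) *
              (∑ t : Fin n, (v i t : ℂ) * w t) ^ (d - 1)) * (v i s : ℂ)) := by
          refine Finset.sum_congr rfl fun s _ => ?_
          rw [hg s]; congr 1; refine Finset.sum_congr rfl fun i _ => ?_; ring
      _ = (lam j : ℂ) * (d : ℂ) * (∑ t : Fin n, (v j t : ℂ) * w t) ^ (d - 1) :=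
          proj_lem _ horth _ j
      _ = _ := by ring
  rw [← hproj]
  calc (∑ s : Fin n, (v j s : ℂ) * g s)
      = (g t₀ / w t₀) * ∑ s : Fin n, (v j s : ℂ) * w s := by
        rw [Finset.mul_sum]; refine Finset.sum_congr rfl fun s _ => ?_
        rw [hgw s]; ring
    _ = _ := rfl


private lemma grad_lem {n l d : ℕ} (v : Fin l → Fin n → ℝ) (lam : Fin l → ℝ)
    (f : MvPolynomial (Fin n) ℂ)
    (hf : f = ∑ i : Fin l, C ((lam i : ℂ)) * (∑ s : Fin n, C ((v i s : ℂ)) * X s) ^ d)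
    (w : Fin n → ℂ) (s : Fin n) :
    eval w (pderiv s f)
      = ∑ i : Fin l, (lam i : ℂ) *
          ((d : ℂ) * (∑ t : Fin n, (v i t : ℂ) * w t) ^ (d - 1) * (v i s : ℂ)) := by
  subst hf
  rw [map_sum, map_sum]
  refine Finset.sum_congr rfl fun i _ => ?_
  rw [pderiv_C_mul, pderiv_pow]
  have hp : (pderiv s) (∑ t : Fin n, C ((v i t : ℂ)) * X t) = C ((v i s : ℂ)) := by
    rw [map_sum]
    simp [pderiv_X, Pi.single_apply, apply_ite (fun p : MvPolynomial (Fin n) ℂ => C ((v i _ : ℂ)) * p)]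
  rw [hp]
  simp [eval_sum]

private lemma count_S {n l d : ℕ} (hd : 3 ≤ d)
    (v : Fin l → Fin n → ℝ)
    (horthC : ∀ i j : Fin l,
      (∑ s : Fin n, ((v i s : ℂ)) * ((v j s : ℂ))) = if i = j then 1 else 0)
    (lam : Fin l → ℝ) (hlam : ∀ i, lam i ≠ 0)
    (f : MvPolynomial (Fin n) ℂ)
    (hgrad : ∀ (w : Fin n → ℂ) (s : Fin n), eval w (pderiv s f)
      = ∑ i : Fin l, (lam i : ℂ) *
          ((d : ℂ) * (∑ t : Fin n, (v i t : ℂ) * w t) ^ (d - 1) * (v i s : ℂ)))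
    (hcoords : ∀ w : Fin n → ℂ, w ≠ 0 →
      (∀ s t : Fin n, eval w (pderiv s f) * w t = eval w (pderiv t f) * w s) →
      ∃ μ : ℂ, ∀ i : Fin l, (d : ℂ) * (lam i : ℂ) *
          (∑ t : Fin n, (v i t : ℂ) * w t) ^ (d - 1)
        = μ * (∑ t : Fin n, (v i t : ℂ) * w t))
    (S : Finset (Fin l)) (hS : S.Nonempty) :
    Set.ncard {L : Submodule ℂ (Fin n → ℂ) | ∃ w : Fin n → ℂ, w ≠ 0 ∧
        (∀ i j : Fin n, eval w (pderiv i f) * w j = eval w (pderiv j f) * w i) ∧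
        (w = fun s => ∑ i : Fin l, (∑ t : Fin n, (v i t : ℂ) * w t) * (v i s : ℂ)) ∧
        (∀ i : Fin l, (∑ t : Fin n, (v i t : ℂ) * w t) ≠ 0 ↔ i ∈ S) ∧
        L = Submodule.span ℂ {w}}
      = (d - 2) ^ (S.card - 1) := by
  classical
  obtain ⟨i₀, hi₀⟩ := hS
  have hlamC : ∀ i, (lam i : ℂ) ≠ 0 := fun i => by exact_mod_cast hlam i
  -- root finsets
  have hroot : ∀ i : Fin l, ∃ F : Finset ℂ,
      (∀ x, x ∈ F ↔ x ^ (d - 2) = (lam i₀ : ℂ) / (lam i)) ∧ F.card = d - 2 := by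
    intro i
    have hm0 : (d - 2 : ℕ) ≠ 0 := by omega
    have ha : (lam i₀ : ℂ) / (lam i) ≠ 0 := div_ne_zero (hlamC i₀) (hlamC i)
    have hζ := Complex.isPrimitiveRoot_exp (d - 2) hm0
    refine ⟨(Polynomial.nthRoots (d - 2) ((lam i₀ : ℂ) / (lam i))).toFinset, ?_, ?_⟩
    · intro x
      rw [Multiset.mem_toFinset, Polynomial.mem_nthRoots (by omega : 0 < d - 2)]
    · rw [Multiset.toFinset_card_of_nodup (hζ.nthRoots_nodup ha), hζ.card_nthRoots]
      obtain ⟨z, hz⟩ := Complex.isAlgClosed.exists_pow_nat_eq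
        ((lam i₀ : ℂ) / (lam i)) (by omega : 0 < d - 2)
      rw [if_pos ⟨z, hz⟩]
  choose F hFmem hFcard using hroot
  set R : Fin l → Finset ℂ :=
    fun i => if i = i₀ then {1} else if i ∈ S then F i else {0} with hR
  set wof : (Fin l → ℂ) → (Fin n → ℂ) :=
    fun r s => ∑ i : Fin l, r i * (v i s : ℂ) with hwof
  have hproj : ∀ (r : Fin l → ℂ) (j : Fin l),
      (∑ t : Fin n, (v j t : ℂ) * wof r t) = r j :=
    fun r j => proj_lem (fun i s => (v i s : ℂ)) horthC r j
  set Ψ : (Fin l → ℂ) → Submodule ℂ (Fin n → ℂ) :=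
    fun r => Submodule.span ℂ {wof r} with hΨ
  -- facts about members of the piFinset
  have hmemR : ∀ r : Fin l → ℂ, r ∈ Fintype.piFinset R →
      r i₀ = 1 ∧ (∀ i, i ∉ S → r i = 0) ∧
      (∀ i, i ∈ S → i ≠ i₀ → r i ^ (d - 2) = (lam i₀ : ℂ) / (lam i)) ∧
      (∀ i, i ∈ S → r i ≠ 0) := by
    intro r hr
    rw [Fintype.mem_piFinset] at hr
    have h0 : r i₀ = 1 := by
      have := hr i₀; rw [hR] at this; simp only [if_pos rfl] at this
      simpa using this
    have h1 : ∀ i, i ∉ S → r i = 0 := by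
      intro i hi
      have hne : i ≠ i₀ := fun h => hi (h ▸ hi₀)
      have := hr i; rw [hR] at this
      simp only [if_neg hne, if_neg hi] at this
      simpa using this
    have h2 : ∀ i, i ∈ S → i ≠ i₀ → r i ^ (d - 2) = (lam i₀ : ℂ) / (lam i) := by
      intro i hi hne
      have := hr i; rw [hR] at this
      simp only [if_neg hne, if_pos hi] at this
      exact (hFmem i (r i)).1 this
    refine ⟨h0, h1, h2, ?_⟩
    intro i hi
    by_cases hne : i = i₀
    · rw [hne, h0]; exact one_ne_zero
    · intro hz
      have := h2 i hi hne
      rw [hz, zero_pow (by omega : (d - 2 : ℕ) ≠ 0)] at this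
      exact div_ne_zero (hlamC i₀) (hlamC i) this.symm
  -- the set equals the image of the piFinset under Ψ
  have himg : {L : Submodule ℂ (Fin n → ℂ) | ∃ w : Fin n → ℂ, w ≠ 0 ∧
        (∀ i j : Fin n, eval w (pderiv i f) * w j = eval w (pderiv j f) * w i) ∧
        (w = fun s => ∑ i : Fin l, (∑ t : Fin n, (v i t : ℂ) * w t) * (v i s : ℂ)) ∧
        (∀ i : Fin l, (∑ t : Fin n, (v i t : ℂ) * w t) ≠ 0 ↔ i ∈ S) ∧
        L = Submodule.span ℂ {w}}
      = Ψ '' ↑(Fintype.piFinset R) := by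
    ext L
    simp only [Set.mem_setOf_eq, Set.mem_image, Finset.mem_coe]
    constructor
    · rintro ⟨w, hw0, heig, hw, hsupp, rfl⟩
      set c : Fin l → ℂ := fun i => ∑ t : Fin n, (v i t : ℂ) * w t with hc
      obtain ⟨μ, hμ⟩ := hcoords w hw0 heig
      have hc0 : c i₀ ≠ 0 := (hsupp i₀).2 hi₀
      set r : Fin l → ℂ := fun i => c i / c i₀ with hrdef
      have hsub : ∀ i, i ∈ S → (lam i : ℂ) * c i ^ (d - 2) = (lam i₀ : ℂ) * c i₀ ^ (d - 2) := by
        intro i hi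
        have hci : c i ≠ 0 := (hsupp i).2 hi
        have key : ∀ j, c j ≠ 0 → (d : ℂ) * (lam j : ℂ) * c j ^ (d - 2) = μ := by
          intro j hcj
          have := hμ j
          rw [show d - 1 = (d - 2) + 1 by omega, pow_succ, ← mul_assoc] at this
          exact mul_right_cancel₀ hcj this
        have hdne : (d : ℂ) ≠ 0 := by
          exact_mod_cast (by omega : (d : ℕ) ≠ 0)
        have := (key i hci).trans (key i₀ hc0).symm
        field_simp at this
        -- this : d * lam i * c i ^ (d-2) = d * lam i₀ * c i₀ ^ (d-2) roughly
        apply mul_left_cancel₀ hdne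
        linear_combination (d : ℂ) * this
      refine ⟨r, ?_, ?_⟩
      · rw [Fintype.mem_piFinset]
        intro i
        rw [hR]
        by_cases hii : i = i₀
        · subst hii; simp only [if_pos rfl]
          simp [hrdef, div_self hc0]
        · simp only [if_neg hii]
          by_cases hiS : i ∈ S
          · rw [if_pos hiS, hFmem]
            have hci : c i ≠ 0 := (hsupp i).2 hiS
            have h := hsub i hiS
            rw [hrdef]
            rw [div_pow]
            rw [div_eq_div_iff (pow_ne_zero _ hc0) (hlamC i)]
            linear_combination h
          · rw [if_neg hiS]
            have : c i = 0 := by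
              by_contra hne; exact hiS ((hsupp i).1 hne)
            simp [hrdef, this]
      · -- Ψ r = span {w}
        have hwr : wof r = (c i₀)⁻¹ • w := by
          funext s
          rw [hwof]
          simp only [Pi.smul_apply, smul_eq_mul]
          have hws : w s = ∑ i : Fin l, c i * (v i s : ℂ) := congrFun hw s
          rw [hws, Finset.mul_sum]
          refine Finset.sum_congr rfl fun i _ => ?_
          rw [hrdef]
          field_simp
        rw [hΨ]
        simp only
        rw [hwr, Submodule.span_singleton_smul_eq (isUnit_iff_ne_zero.2 (inv_ne_zero hc0)) w]
    · rintro ⟨r, hr, rfl⟩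
      obtain ⟨h0, h1, h2, h3⟩ := hmemR r hr
      set w : Fin n → ℂ := wof r with hwdef
      have hcr : ∀ j, (∑ t : Fin n, (v j t : ℂ) * w t) = r j := fun j => hproj r j
      have hw0 : w ≠ 0 := by
        intro h
        have := hcr i₀
        rw [h] at this
        simp only [Pi.zero_apply, mul_zero, Finset.sum_const_zero] at this
        rw [h0] at this
        exact one_ne_zero this.symm
      have hkey : ∀ i, (lam i : ℂ) * ((d : ℂ) * r i ^ (d - 1))
          = (d : ℂ) * (lam i₀ : ℂ) * r i := by
        intro i
        by_cases hiS : i ∈ S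
        · by_cases hii : i = i₀
          · subst hii; rw [h0]; ring
          · have h := h2 i hiS hii
            have h' : (lam i : ℂ) * r i ^ (d - 2) = (lam i₀ : ℂ) := by
              rw [h, ← mul_div_assoc, mul_comm ((lam i : ℂ)) ((lam i₀ : ℂ)),
                mul_div_assoc, div_self (hlamC i), mul_one]
            rw [show d - 1 = (d - 2) + 1 by omega, pow_succ]
            linear_combination (d : ℂ) * r i * h'
        · rw [h1 i hiS, zero_pow (by omega : (d - 1 : ℕ) ≠ 0)]
          ring
      have hgw : ∀ s, eval w (pderiv s f) = ((d : ℂ) * (lam i₀ : ℂ)) * w s := by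
        intro s
        rw [hgrad w s]
        have : ∀ i : Fin l, (lam i : ℂ) *
            ((d : ℂ) * (∑ t : Fin n, (v i t : ℂ) * w t) ^ (d - 1) * (v i s : ℂ))
            = ((d : ℂ) * (lam i₀ : ℂ)) * (r i * (v i s : ℂ)) := by
          intro i
          rw [hcr i]
          have := hkey i
          linear_combination (v i s : ℂ) * this
        simp_rw [this]
        rw [← Finset.mul_sum]
      refine ⟨w, hw0, ?_, ?_, ?_, rfl⟩
      · intro s t; rw [hgw s, hgw t]; ring
      · funext s
        rw [hwdef]
        simp only [hwof]
        exact Finset.sum_congr rfl fun i _ => by rw [hcr i]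
      · intro i
        rw [hcr i]
        constructor
        · intro hne
          by_contra hiS
          exact hne (h1 i hiS)
        · exact h3 i
  rw [himg]
  -- injectivity on the piFinset
  have hinj : Set.InjOn Ψ ↑(Fintype.piFinset R) := by
    intro r hr r' hr' heq
    obtain ⟨h0, _, _, _⟩ := hmemR r (Finset.mem_coe.1 hr)
    obtain ⟨h0', _, _, _⟩ := hmemR r' (Finset.mem_coe.1 hr')
    have hmem : wof r ∈ Submodule.span ℂ {wof r'} := by
      rw [hΨ] at heq
      simp only at heq
      rw [← heq]
      exact Submodule.mem_span_singleton_self _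
    obtain ⟨t, ht⟩ := Submodule.mem_span_singleton.1 hmem
    have hcoord : ∀ j, t * r' j = r j := by
      intro j
      have h1 := hproj r j
      have h2' := hproj r' j
      have : (∑ s : Fin n, (v j s : ℂ) * (t • wof r') s) = t * r' j := by
        simp only [Pi.smul_apply, smul_eq_mul]
        rw [← h2', Finset.mul_sum]
        exact Finset.sum_congr rfl fun s _ => by ring
      rw [ht] at this
      rw [← this, ← h1]
    have ht1 : t = 1 := by
      have := hcoord i₀
      rw [h0, h0', mul_one] at this
      exact this
    funext j
    rw [← hcoord j, ht1, one_mul]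
  rw [Set.ncard_image_of_injOn hinj, Set.ncard_coe_finset,
    Fintype.card_piFinset]
  have hcard : ∀ i : Fin l, (R i).card = if i ∈ S.erase i₀ then d - 2 else 1 := by
    intro i
    rw [hR]
    by_cases hii : i = i₀
    · subst hii
      simp [Finset.mem_erase]
    · by_cases hiS : i ∈ S
      · simp only [if_neg hii, if_pos hiS, hFcard i]
        rw [if_pos (Finset.mem_erase.2 ⟨hii, hiS⟩)]
      · simp only [if_neg hii, if_neg hiS]
        rw [if_neg (fun h => hiS (Finset.mem_erase.1 h).2)]
        simp
  simp_rw [hcard]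
  rw [Finset.prod_ite_mem, Finset.univ_inter, Finset.prod_const,
    Finset.card_erase_of_mem hi₀]


private lemma sum_arith {l d : ℕ} (hd : 3 ≤ d) (hl : 1 ≤ l) :
    (∑ S ∈ Finset.univ.filter (fun S : Finset (Fin l) => S.Nonempty),
      (d - 2) ^ (S.card - 1)) = ((d - 1) ^ l - 1) / (d - 2) := by
  classical
  set m := d - 2 with hm
  have hm1 : 1 ≤ m := by omega
  have hall : (∑ S : Finset (Fin l), m ^ S.card) = (m + 1) ^ l := by
    have := Finset.prod_add (fun _ : Fin l => m) (fun _ : Fin l => 1) Finset.univ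
    simp only [Finset.prod_const, Finset.prod_const_one, mul_one, Finset.card_univ,
      Fintype.card_fin] at this
    rw [← Finset.powerset_univ, this]
    exact Finset.sum_congr rfl fun S _ => by rw [one_pow, mul_one]
  have hsplit : (∑ S ∈ Finset.univ.filter (fun S : Finset (Fin l) => S.Nonempty), m ^ S.card)
      + 1 = (m + 1) ^ l := by
    rw [← hall, ← Finset.sum_filter_add_sum_filter_not Finset.univ
      (fun S : Finset (Fin l) => S.Nonempty) (fun S => m ^ S.card)]
    congr 1
    have : Finset.univ.filter (fun S : Finset (Fin l) => ¬S.Nonempty) = {∅} := by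
      ext S
      simp [Finset.not_nonempty_iff_eq_empty]
    rw [this]
    simp
  have hmul : m * (∑ S ∈ Finset.univ.filter (fun S : Finset (Fin l) => S.Nonempty),
      m ^ (S.card - 1))
      = ∑ S ∈ Finset.univ.filter (fun S : Finset (Fin l) => S.Nonempty), m ^ S.card := by
    rw [Finset.mul_sum]
    refine Finset.sum_congr rfl fun S hS => ?_
    have hpos : 0 < S.card := Finset.card_pos.2 (Finset.mem_filter.1 hS).2
    rw [← pow_succ']
    congr 1
    omega
  have hd1 : d - 1 = m + 1 := by omega
  rw [hd1, ← hsplit]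
  rw [Nat.add_sub_cancel, ← hmul, Nat.mul_div_cancel_left _ (by omega : 0 < m)]

private lemma total_count {n l d : ℕ} (hd : 3 ≤ d) (hl : 1 ≤ l)
    (v : Fin l → Fin n → ℝ) (f : MvPolynomial (Fin n) ℂ)
    (hcount : ∀ S : Finset (Fin l), S.Nonempty →
      Set.ncard {L : Submodule ℂ (Fin n → ℂ) | ∃ w : Fin n → ℂ, w ≠ 0 ∧
          (∀ i j : Fin n, eval w (pderiv i f) * w j = eval w (pderiv j f) * w i) ∧
          (w = fun s => ∑ i : Fin l, (∑ t : Fin n, (v i t : ℂ) * w t) * (v i s : ℂ)) ∧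
          (∀ i : Fin l, (∑ t : Fin n, (v i t : ℂ) * w t) ≠ 0 ↔ i ∈ S) ∧
          L = Submodule.span ℂ {w}}
        = (d - 2) ^ (S.card - 1)) :
    Set.ncard {L : Submodule ℂ (Fin n → ℂ) | ∃ w : Fin n → ℂ, w ≠ 0 ∧
        (∀ i j : Fin n, eval w (pderiv i f) * w j = eval w (pderiv j f) * w i) ∧
        (w = fun s => ∑ i : Fin l, (∑ t : Fin n, (v i t : ℂ) * w t) * (v i s : ℂ)) ∧
        L = Submodule.span ℂ {w}}
      = ((d - 1) ^ l - 1) / (d - 2) := by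
  classical
  set lineSet : Finset (Fin l) → Set (Submodule ℂ (Fin n → ℂ)) :=
    fun S => {L | ∃ w : Fin n → ℂ, w ≠ 0 ∧
      (∀ i j : Fin n, eval w (pderiv i f) * w j = eval w (pderiv j f) * w i) ∧
      (w = fun s => ∑ i : Fin l, (∑ t : Fin n, (v i t : ℂ) * w t) * (v i s : ℂ)) ∧
      (∀ i : Fin l, (∑ t : Fin n, (v i t : ℂ) * w t) ≠ 0 ↔ i ∈ S) ∧
      L = Submodule.span ℂ {w}} with hlineSet
  have hfin : ∀ S : Finset (Fin l), S.Nonempty → (lineSet S).Finite := by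
    intro S hS
    apply Set.finite_of_ncard_ne_zero
    rw [hcount S hS]
    exact (Nat.pow_pos (by omega : 0 < d - 2)).ne'
  set g : Finset (Fin l) → Finset (Submodule ℂ (Fin n → ℂ)) :=
    fun S => if h : S.Nonempty then (hfin S h).toFinset else ∅ with hg
  set T : Finset (Finset (Fin l)) :=
    Finset.univ.filter (fun S : Finset (Fin l) => S.Nonempty) with hT
  -- disjointness of supports
  have hdisj : ∀ S ∈ T, ∀ S' ∈ T, S ≠ S' → Disjoint (g S) (g S') := by
    intro S hS S' hS' hne
    rw [Finset.disjoint_left]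
    intro L hLS hLS'
    simp only [hg] at hLS hLS'
    rw [dif_pos (Finset.mem_filter.1 hS).2, Set.Finite.mem_toFinset] at hLS
    rw [dif_pos (Finset.mem_filter.1 hS').2, Set.Finite.mem_toFinset] at hLS'
    obtain ⟨w, hw0, _, hw, hsupp, hL⟩ := hLS
    obtain ⟨w', hw0', _, hw', hsupp', hL'⟩ := hLS'
    apply hne
    have hmem : w' ∈ Submodule.span ℂ {w} := by
      rw [← hL, hL']
      exact Submodule.mem_span_singleton_self _
    obtain ⟨t, ht⟩ := Submodule.mem_span_singleton.1 hmem
    have ht0 : t ≠ 0 := by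
      rintro rfl
      apply hw0'
      rw [← ht]
      simp
    ext i
    rw [← hsupp i, ← hsupp' i]
    have hci : (∑ s : Fin n, (v i s : ℂ) * w' s) = t * ∑ s : Fin n, (v i s : ℂ) * w s := by
      rw [Finset.mul_sum]
      refine Finset.sum_congr rfl fun s _ => ?_
      rw [← ht]
      simp only [Pi.smul_apply, smul_eq_mul]
      ring
    rw [hci]
    constructor
    · intro h hz
      exact h ((mul_eq_zero.1 hz).resolve_left ht0)
    · intro h hz
      exact h (by rw [hz, mul_zero])
  -- the total set is the coe of the biUnion
  have hcover : {L : Submodule ℂ (Fin n → ℂ) | ∃ w : Fin n → ℂ, w ≠ 0 ∧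
        (∀ i j : Fin n, eval w (pderiv i f) * w j = eval w (pderiv j f) * w i) ∧
        (w = fun s => ∑ i : Fin l, (∑ t : Fin n, (v i t : ℂ) * w t) * (v i s : ℂ)) ∧
        L = Submodule.span ℂ {w}}
      = ↑(T.biUnion g) := by
    ext L
    simp only [Set.mem_setOf_eq, Finset.coe_biUnion, Set.mem_iUnion, Finset.mem_coe,
      Finset.mem_biUnion]
    constructor
    · rintro ⟨w, hw0, heig, hw, rfl⟩
      set S : Finset (Fin l) :=
        Finset.univ.filter (fun i => (∑ t : Fin n, (v i t : ℂ) * w t) ≠ 0) with hSdef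
      have hSne : S.Nonempty := by
        rw [Finset.filter_nonempty_iff]
        by_contra h
        push_neg at h
        apply hw0
        rw [hw]
        funext s
        simp only [Pi.zero_apply]
        refine Finset.sum_eq_zero fun i _ => ?_
        rw [h i (Finset.mem_univ i), zero_mul]
      refine ⟨S, Finset.mem_filter.2 ⟨Finset.mem_univ S, hSne⟩, ?_⟩
      simp only [hg]
      rw [dif_pos hSne, Set.Finite.mem_toFinset]
      exact ⟨w, hw0, heig, hw, fun i => by simp [hSdef], rfl⟩
    · rintro ⟨S, hST, hLg⟩
      simp only [hg] at hLg
      rw [dif_pos (Finset.mem_filter.1 hST).2, Set.Finite.mem_toFinset] at hLg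
      obtain ⟨w, hw0, heig, hw, _, hL⟩ := hLg
      exact ⟨w, hw0, heig, hw, hL⟩
  rw [hcover, Set.ncard_coe_finset, Finset.card_biUnion hdisj]
  rw [← sum_arith hd hl (d := d)]
  refine Finset.sum_congr rfl fun S hS => ?_
  have hSne := (Finset.mem_filter.1 hS).2
  simp only [hg]
  rw [dif_pos hSne]
  rw [← Set.ncard_eq_toFinset_card _ (hfin S hSne), hcount S hSne]


/-- for `f(x) = ∑_{i=1}^l λᵢ (vᵢ·x)^d` with `v₁,…,v_l ∈ ℝⁿ`
orthonormal and `λᵢ ≠ 0`, and every nonempty `S ⊆ {1,…,l}`, the set of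
eigenvector lines `ℂ·w` with `w = ∑ᵢ (vᵢ·w)vᵢ` and `{i : vᵢ·w ≠ 0} = S` has
exactly `(d-2)^{|S|-1}` elements; consequently the total number of eigenvector
lines in the complex span of `v₁,…,v_l` is `((d-1)^l - 1)/(d-2)`. -/
theorem odeco_eigenvector_count_by_support
    (n l d : ℕ) (hd : 3 ≤ d) (hl : 1 ≤ l) (hln : l ≤ n)
    (v : Fin l → Fin n → ℝ)
    (horth : ∀ i j : Fin l, (∑ s : Fin n, v i s * v j s) = if i = j then 1 else 0)
    (lam : Fin l → ℝ) (hlam : ∀ i, lam i ≠ 0)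
    (f : MvPolynomial (Fin n) ℂ)
    (hf : f = ∑ i : Fin l, C ((lam i : ℂ)) * (∑ s : Fin n, C ((v i s : ℂ)) * X s) ^ d) :
    (∀ S : Finset (Fin l), S.Nonempty →
      Set.ncard {L : Submodule ℂ (Fin n → ℂ) | ∃ w : Fin n → ℂ, w ≠ 0 ∧
          (∀ i j : Fin n, eval w (pderiv i f) * w j = eval w (pderiv j f) * w i) ∧
          (w = fun s => ∑ i : Fin l, (∑ t : Fin n, (v i t : ℂ) * w t) * (v i s : ℂ)) ∧
          (∀ i : Fin l, (∑ t : Fin n, (v i t : ℂ) * w t) ≠ 0 ↔ i ∈ S) ∧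
          L = Submodule.span ℂ {w}}
        = (d - 2) ^ (S.card - 1)) ∧
    Set.ncard {L : Submodule ℂ (Fin n → ℂ) | ∃ w : Fin n → ℂ, w ≠ 0 ∧
        (∀ i j : Fin n, eval w (pderiv i f) * w j = eval w (pderiv j f) * w i) ∧
        (w = fun s => ∑ i : Fin l, (∑ t : Fin n, (v i t : ℂ) * w t) * (v i s : ℂ)) ∧
        L = Submodule.span ℂ {w}}
      = ((d - 1) ^ l - 1) / (d - 2) := by
  have horthC : ∀ i j : Fin l,
      (∑ s : Fin n, ((v i s : ℂ)) * ((v j s : ℂ))) = if i = j then 1 else 0 := by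
    intro i j
    have h := horth i j
    calc (∑ s : Fin n, ((v i s : ℂ)) * ((v j s : ℂ)))
        = ((∑ s : Fin n, v i s * v j s : ℝ) : ℂ) := by push_cast; rfl
      _ = _ := by rw [h]; split_ifs <;> simp
  have hgrad : ∀ (w : Fin n → ℂ) (s : Fin n), eval w (pderiv s f)
      = ∑ i : Fin l, (lam i : ℂ) *
          ((d : ℂ) * (∑ t : Fin n, (v i t : ℂ) * w t) ^ (d - 1) * (v i s : ℂ)) :=
    fun w s => grad_lem v lam f hf w s
  have hcoords : ∀ w : Fin n → ℂ, w ≠ 0 →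
      (∀ s t : Fin n, eval w (pderiv s f) * w t = eval w (pderiv t f) * w s) →
      ∃ μ : ℂ, ∀ i : Fin l, (d : ℂ) * (lam i : ℂ) *
          (∑ t : Fin n, (v i t : ℂ) * w t) ^ (d - 1)
        = μ * (∑ t : Fin n, (v i t : ℂ) * w t) :=
    fun w hw0 heig => eigen_coords v lam horthC w hw0
      (fun s => eval w (pderiv s f)) (fun s => hgrad w s) heig
  have hpart1 := fun S hS => count_S hd v horthC lam hlam f hgrad hcoords S hS
  exact ⟨hpart1, total_count hd hl v f hpart1⟩
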